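/- Let λ₁, λ₂, μ₁, μ₂ > 0 with λ₁+λ₂ < μ₁+μ₂ and λ₂ < μ₂. Set x = λ₂/μ₂, y = (λ₁+λ₂)/(μ₁+μ₂), C = μ₁/(μ₁+μ₂), γ_s = λ₁/(λ₁+λ₂), and define π_{m,n} = C·x^m·y^n for m ≥ 1 and π_{0,n} = y^n. Then for all m ≥ 1 and n ≥ 0, ∑_{k=0}^{m} π_{m-k, n+k+1} · μ₁ · γ_s · (1-γ_s)^k = C·λ₁·y^n·x^m. -/

import Mathlib

lemma geom_key (x z C : ℝ) (h : C * x = x - z) :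
    ∀ m : ℕ, ∑ k ∈ Finset.range m, C * x ^ (m - k) * z ^ k = x ^ m - z ^ m := by
  intro m
  induction m with
  | zero => simp
  | succ m ih =>
    rw [Finset.sum_range_succ]
    have hsum : ∑ k ∈ Finset.range m, C * x ^ (m + 1 - k) * z ^ k
        = x * ∑ k ∈ Finset.range m, C * x ^ (m - k) * z ^ k := by
      rw [Finset.mul_sum]
      apply Finset.sum_congr rfl
      intro k hk
      have hk' : k ≤ m := le_of_lt (Finset.mem_range.mp hk)
      have : m + 1 - k = (m - k) + 1 := by omega
      rw [this, pow_succ]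
      ring
    rw [hsum, ih]
    have h1 : m + 1 - m = 1 := by omega
    rw [h1, pow_one]
    linear_combination z ^ m * h

theorem stmt_3 (l1 l2 m1 m2 : ℝ) (hl1 : 0 < l1) (hl2 : 0 < l2) (hm1 : 0 < m1)
    (hm2 : 0 < m2) (hstab1 : l1 + l2 < m1 + m2) (hstab2 : l2 < m2)
    (x y C γ : ℝ) (hx : x = l2 / m2) (hy : y = (l1 + l2) / (m1 + m2))
    (hC : C = m1 / (m1 + m2)) (hγ : γ = l1 / (l1 + l2))
    (π : ℕ → ℕ → ℝ)
    (hπ : ∀ m n : ℕ, π m n = if m = 0 then y ^ n else C * x ^ m * y ^ n) :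
    ∀ m n : ℕ, 1 ≤ m →
      ∑ k ∈ Finset.range (m + 1), π (m - k) (n + k + 1) * m1 * γ * (1 - γ) ^ k =
        C * l1 * y ^ n * x ^ m := by
  have hll : l1 + l2 ≠ 0 := by positivity
  have hmm : m1 + m2 ≠ 0 := by positivity
  have hm2' : m2 ≠ 0 := ne_of_gt hm2
  have hA : m1 * γ * y = C * l1 := by
    rw [hγ, hy, hC]; field_simp
  have hB : C * x = x - y * (1 - γ) := by
    rw [hγ, hy, hC, hx]; field_simp; ring
  intro m n hm
  rw [Finset.sum_range_succ]
  have hlast : π (m - m) (n + m + 1) * m1 * γ * (1 - γ) ^ m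
      = C * l1 * y ^ n * (y * (1 - γ)) ^ m := by
    rw [Nat.sub_self, hπ, if_pos rfl, mul_pow]
    linear_combination (y ^ n * y ^ m * (1 - γ) ^ m) * hA
  have hmain : ∑ k ∈ Finset.range m, π (m - k) (n + k + 1) * m1 * γ * (1 - γ) ^ k
      = C * l1 * y ^ n * (∑ k ∈ Finset.range m, C * x ^ (m - k) * (y * (1 - γ)) ^ k) := by
    rw [Finset.mul_sum]
    apply Finset.sum_congr rfl
    intro k hk
    have hk' : k < m := Finset.mem_range.mp hk
    have hne : m - k ≠ 0 := by omega
    rw [hπ, if_neg hne, mul_pow]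
    linear_combination (C * x ^ (m - k) * y ^ n * y ^ k * (1 - γ) ^ k) * hA
  rw [hlast, hmain, geom_key x (y * (1 - γ)) C hB m]
  ring
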